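/- Let I be a closed bounded interval of ℝ⁺ with |I| > 0, and let s₁ < s₂ < ⋯ < s_m be nonnegative reals with s_j − s_{j−2} ≥ |I| for all 3 ≤ j ≤ m, s₁ ≥ 0, and s_m ≤ sup(I). Then m ≤ 2·⌈sup(I)/|I|⌉ + 1. -/
import Mathlib


/-- Counting bound: if `0 ≤ s 1 < s 2 < ⋯ < s m ≤ sup(I) = b`, with
`s j - s (j-2) ≥ |I| = b - a > 0` for all `3 ≤ j ≤ m`, where `I = [a,b] ⊆ ℝ⁺`,
then `m ≤ 2⌈b/(b-a)⌉ + 1`. -/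
theorem clock_copies_bound (m : ℕ) (hm : 1 ≤ m) (a b : ℝ)
    (ha : 0 ≤ a) (hab : a < b) (s : ℕ → ℝ)
    (hmono : ∀ i j, 1 ≤ i → i < j → j ≤ m → s i < s j)
    (hsep : ∀ j, 3 ≤ j → j ≤ m → s (j - 2) + (b - a) ≤ s j)
    (hs1 : 0 ≤ s 1) (hsm : s m ≤ b) :
    (m : ℤ) ≤ 2 * ⌈b / (b - a)⌉ + 1 := by
  have hba : (0:ℝ) < b - a := by linarith
  set k : ℤ := ⌈b / (b - a)⌉ with hk
  have hb : 0 < b := lt_of_le_of_lt ha hab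
  have hk1 : 1 ≤ k := by
    have : (0:ℝ) < b / (b - a) := div_pos hb hba
    exact Int.ceil_pos.mpr this
  by_contra h
  push_neg at h
  have h2 : 2 * k + 2 ≤ (m : ℤ) := by omega
  set K : ℕ := k.toNat with hK
  have hKk : (K : ℤ) = k := Int.toNat_of_nonneg (by omega)
  have hKm : 2 * K + 2 ≤ m := by
    have := h2
    rw [← hKk] at this
    exact_mod_cast this
  have key : ∀ t : ℕ, 2 * t + 1 ≤ m → (t : ℝ) * (b - a) ≤ s (2 * t + 1) := by
    intro t
    induction t with
    | zero => intro _; simpa using hs1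
    | succ n ih =>
      intro hle
      have h1 : 2 * n + 1 ≤ m := by omega
      have ih' := ih h1
      have hsep' := hsep (2 * (n + 1) + 1) (by omega) hle
      have : 2 * (n + 1) + 1 - 2 = 2 * n + 1 := by omega
      rw [this] at hsep'
      push_cast
      nlinarith
  have hkey := key K (by omega)
  have hkb : b ≤ (K : ℝ) * (b - a) := by
    have h1 : b / (b - a) ≤ (k : ℝ) := Int.le_ceil _
    have h2 : b / (b - a) ≤ (K : ℝ) := by
      rw [show ((K : ℝ)) = ((K : ℤ) : ℝ) by push_cast; ring, hKk]; exact h1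
    calc b = (b / (b - a)) * (b - a) := by field_simp
    _ ≤ (K : ℝ) * (b - a) := by nlinarith
  have hlt : s (2 * K + 1) < s m := hmono (2 * K + 1) m (by omega) (by omega) le_rfl
  linarith
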